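/- Let (G,f) = der_θ(G,·) with θ^(n-1) = id. Every automorphism ψ of the n-ary group (G,f) has the form ψ(x) = φ(x)·a where φ ∈ Aut(G,·), a satisfies a·θ(a)···θ^(n-1)(a) = a, and [θ,φ] = I_a (with I_a(x) = a⁻¹xa). -/

import Mathlib

/-- The `(θ,b)`-derived `n`-ary operation on a group `G`. -/
def derOp {G : Type*} [Group G] (n : ℕ) (θ : MulAut G) (b : G) (x : Fin n → G) : G :=
  (List.ofFn fun i : Fin n => (θ ^ (i : ℕ)) (x i)).prod * b

lemma derOp_eval {G : Type*} [Group G] (m : ℕ) (θ : MulAut G) (x : Fin (m+2) → G) :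
    derOp (m+2) θ 1 x
      = x 0 * θ (x 1) * (List.ofFn fun i : Fin m => (θ ^ ((i:ℕ)+2)) (x i.succ.succ)).prod := by
  simp [derOp, List.ofFn_succ, pow_succ, mul_assoc, pow_add]

theorem automorphism_structure {G : Type*} [Group G] (n : ℕ) (hn : 2 ≤ n)
    (θ : MulAut G) (hθ : θ ^ (n - 1) = 1)
    (ψ : G → G) (hbij : Function.Bijective ψ)
    (hhom : ∀ x : Fin n → G, ψ (derOp n θ 1 x) = derOp n θ 1 (fun i => ψ (x i))) :
    ∃ (φ : MulAut G) (a : G),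
      (∀ x : G, ψ x = φ x * a) ∧
      derOp n θ 1 (fun _ : Fin n => a) = a ∧
      ∀ x : G, θ (φ (θ⁻¹ (φ⁻¹ x))) = a⁻¹ * x * a := by
  obtain ⟨m, rfl⟩ : ∃ m, n = m + 2 := ⟨n - 2, by omega⟩
  set a : G := ψ 1 with ha
  -- the E vectors
  set E : G → G → Fin (m+2) → G := fun x y i =>
    if i = 0 then x else if i = 1 then θ⁻¹ y else 1 with hE
  have hE0 : ∀ x y, E x y 0 = x := fun x y => rfl
  have hE1 : ∀ x y, E x y 1 = θ⁻¹ y := fun x y => rfl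
  have hEs : ∀ x y (i : Fin m), E x y i.succ.succ = 1 := by
    intro x y i
    simp only [hE]; simp [Fin.ext_iff]
  have hderE : ∀ x y, derOp (m+2) θ 1 (E x y) = x * y := by
    intro x y
    rw [derOp_eval]
    have : (List.ofFn fun i : Fin m => (θ ^ ((i:ℕ)+2)) (E x y i.succ.succ)).prod = 1 := by
      apply List.prod_eq_one
      intro z hz
      rw [List.mem_ofFn] at hz
      obtain ⟨i, rfl⟩ := hz
      simp [hEs]
    rw [this, hE0 x y, hE1 x y]
    simp
  set T : G := (List.ofFn fun i : Fin m => (θ ^ ((i:ℕ)+2)) a).prod with hT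
  have hderψE : ∀ x y, derOp (m+2) θ 1 (fun i => ψ (E x y i)) = ψ x * θ (ψ (θ⁻¹ y)) * T := by
    intro x y
    rw [derOp_eval, hT]
    have h : ∀ i : Fin m, ψ (E x y i.succ.succ) = a := by
      intro i; rw [hEs]
    simp only [h, hE0, hE1]
  -- key equation
  have key : ∀ x y, ψ (x * y) = ψ x * θ (ψ (θ⁻¹ y)) * T := by
    intro x y
    have := hhom (E x y)
    rwa [hderE, hderψE] at this
  have hT1 : θ a * T = 1 := by
    have h := key 1 1
    rw [mul_one, ← ha] at h
    simp only [map_one] at h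
    rw [mul_assoc] at h
    exact (left_eq_mul.mp h)
  have key2 : ∀ y, θ (ψ (θ⁻¹ y)) * T = a⁻¹ * ψ y := by
    intro y
    have := key 1 y
    rw [one_mul, ← ha] at this
    rw [this]; group
  have key3 : ∀ x y, ψ (x * y) = ψ x * a⁻¹ * ψ y := by
    intro x y
    rw [key, mul_assoc, mul_assoc, key2]
  -- φ
  set φ0 : G → G := fun x => ψ x * a⁻¹ with hφ0
  have hφ0bij : Function.Bijective φ0 := by
    exact (Equiv.mulRight a⁻¹).bijective.comp hbij
  have hφ0mul : ∀ x y, φ0 (x * y) = φ0 x * φ0 y := by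
    intro x y
    simp only [hφ0, key3]; group
  set φ : MulAut G := MulEquiv.mk (Equiv.ofBijective φ0 hφ0bij) hφ0mul with hφ
  have hφapp : ∀ x, φ x = ψ x * a⁻¹ := fun x => rfl
  refine ⟨φ, a, fun x => by rw [hφapp]; group, ?_, ?_⟩
  · -- derOp const a = a
    have := hhom (fun _ => 1)
    have h1 : derOp (m+2) θ 1 (fun _ : Fin (m+2) => (1:G)) = 1 := by
      simp [derOp]
    rw [h1, ← ha] at this
    rw [← this]
  · intro x
    have hy : ∀ y, θ (φ (θ⁻¹ y)) = a⁻¹ * φ y * a := by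
      intro y
      have h2 := key2 y
      have hTa : T = (θ a)⁻¹ := eq_inv_of_mul_eq_one_right hT1
      rw [hTa] at h2
      rw [hφapp, hφapp, map_mul, map_inv, h2]
      group
    have := hy (φ⁻¹ x)
    simpa using this
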